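/- Let g > 2 be an integer and let W be the group with presentation ⟨A, B, C | A² = B^{4g} = C⁴ = ABC = C²B^{2g} = 1⟩. Then the element B^{2g}A of W has order 2. -/

import Mathlib

/-- Relators of the Wiman type II group
⟨A, B, C | A² = B^{4g} = C⁴ = ABC = C²B^{2g} = 1⟩, with generators
A, B, C represented by `FreeGroup.of 0`, `FreeGroup.of 1`, `FreeGroup.of 2`. -/
def wimanRels (g : ℕ) : Set (FreeGroup (Fin 3)) :=
  {FreeGroup.of 0 ^ 2, FreeGroup.of 1 ^ (4 * g), FreeGroup.of 2 ^ 4,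
   FreeGroup.of 0 * FreeGroup.of 1 * FreeGroup.of 2,
   FreeGroup.of 2 ^ 2 * FreeGroup.of 1 ^ (2 * g)}

lemma wiman_rel_eq_one {g : ℕ} {r : FreeGroup (Fin 3)} (h : r ∈ wimanRels g) :
    (QuotientGroup.mk r : PresentedGroup (wimanRels g)) = 1 :=
  (QuotientGroup.eq_one_iff r).mpr (Subgroup.subset_normalClosure h)

def wimanF : Fin 3 → Multiplicative (ZMod 2 × ZMod 2) :=
  ![Multiplicative.ofAdd (1, 0), Multiplicative.ofAdd (0, 1),
    Multiplicative.ofAdd (1, 1)]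

lemma wimanF_sq : ∀ x : Multiplicative (ZMod 2 × ZMod 2), x ^ 2 = 1 := by decide

lemma wimanF_rels (g : ℕ) : ∀ r ∈ wimanRels g, FreeGroup.lift wimanF r = 1 := by
  intro r hr
  simp only [wimanRels, Set.mem_insert_iff, Set.mem_singleton_iff] at hr
  rcases hr with rfl | rfl | rfl | rfl | rfl
  · rw [map_pow, FreeGroup.lift_apply_of]; exact wimanF_sq _
  · rw [map_pow, FreeGroup.lift_apply_of, show 4 * g = 2 * (2 * g) by ring,
      pow_mul, wimanF_sq, one_pow]
  · rw [map_pow, FreeGroup.lift_apply_of]; decide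
  · rw [map_mul, map_mul, FreeGroup.lift_apply_of, FreeGroup.lift_apply_of,
      FreeGroup.lift_apply_of]; decide
  · rw [map_mul, map_pow, map_pow, FreeGroup.lift_apply_of, FreeGroup.lift_apply_of,
      mul_comm 2 g, pow_mul, wimanF_sq, wimanF_sq, one_mul]

theorem stmt_11 (g : ℕ) (hg : 2 < g)
    (A B : PresentedGroup (wimanRels g))
    (hA : A = PresentedGroup.of 0) (hB : B = PresentedGroup.of 1) :
    orderOf (B ^ (2 * g) * A) = 2 := by
  subst hA hB
  set A : PresentedGroup (wimanRels g) := PresentedGroup.of 0 with hA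
  set B : PresentedGroup (wimanRels g) := PresentedGroup.of 1 with hB
  set C : PresentedGroup (wimanRels g) := PresentedGroup.of 2 with hC
  have hA2 : A * A = 1 := by
    have := wiman_rel_eq_one (g := g) (Set.mem_insert _ _)
    simp [pow_two] at this; exact this
  have hB4g : B ^ (4 * g) = 1 := by
    have := wiman_rel_eq_one (g := g)
      (Set.mem_insert_of_mem _ (Set.mem_insert _ _))
    simp at this; exact this
  have hABC : A * B * C = 1 := by
    have := wiman_rel_eq_one (g := g)
      (Set.mem_insert_of_mem _ (Set.mem_insert_of_mem _
        (Set.mem_insert_of_mem _ (Set.mem_insert _ _))))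
    simp at this; exact this
  have hC2 : C * C * B ^ (2 * g) = 1 := by
    have := wiman_rel_eq_one (g := g)
      (Set.mem_insert_of_mem _ (Set.mem_insert_of_mem _
        (Set.mem_insert_of_mem _ (Set.mem_insert_of_mem _ rfl))))
    simp [pow_two] at this; exact this
  -- C⁻¹ = A*B
  have hCinv : C⁻¹ = A * B := inv_eq_of_mul_eq_one_left hABC
  -- B^{2g} = A*B*A*B
  have hx : B ^ (2 * g) = A * B * A * B := by
    have h1 : B ^ (2 * g) = (C * C)⁻¹ := (inv_eq_of_mul_eq_one_right hC2).symm
    rw [h1, mul_inv_rev, hCinv]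
    group
  -- B^{2g} = B*A*B*A
  have hx2 : B ^ (2 * g) = B * A * B * A := by
    have h : B * B ^ (2 * g) = B ^ (2 * g) * B := (Commute.self_pow B (2 * g)).eq
    rw [hx] at h
    rw [hx]
    apply mul_right_cancel (b := B)
    simp only [mul_assoc] at h ⊢
    exact h.symm
  have key : (B ^ (2 * g) * A) ^ 2 = 1 := by
    have h3 : A * B ^ (2 * g) * A = A * B * A * B := by
      rw [hx2]
      calc A * (B * A * B * A) * A = A * B * A * B * (A * A) := by group
        _ = A * B * A * B := by rw [hA2, mul_one]
    calc (B ^ (2 * g) * A) ^ 2 = B ^ (2 * g) * (A * B ^ (2 * g) * A) := by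
          rw [pow_two]; simp [mul_assoc]
      _ = B ^ (2 * g) * B ^ (2 * g) := by rw [h3, ← hx]
      _ = B ^ (4 * g) := by rw [← pow_add]; ring_nf
      _ = 1 := hB4g
  -- nontriviality via a homomorphism to Z/2 × Z/2
  have hne : B ^ (2 * g) * A ≠ 1 := by
    intro h
    have hφ := congrArg (PresentedGroup.toGroup (wimanF_rels g)) h
    rw [map_mul, map_pow, map_one, PresentedGroup.toGroup.of,
      PresentedGroup.toGroup.of, mul_comm 2 g, pow_mul, wimanF_sq,
      one_mul] at hφ
    revert hφ
    decide
  exact orderOf_eq_prime key hne
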